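/- The number of intervals of the Mockingbird lattice M(d), d >= 1, equals a_1(d-1), where for each k >= 1 the sequences a_k are defined by a_k(0) = 1 and a_k(n) = a_k(n-1)^2 + sum_{i=0}^{k} binomial(k, i) * a_{k+i}(n-1) for n >= 1. The number of intervals of M(d) for d = 0, 1, 2, ... is 1, 1, 3, 17, 371, 144513. -/
import Mathlib


inductive MTerm : Type
  | M : MTerm
  | var : ℕ → MTerm
  | app : MTerm → MTerm → MTerm

/-- One-step rewrite of the Mockingbird system: replace a subterm `M s` by `s s`. -/
inductive MStep : MTerm → MTerm → Prop
  | mock (s : MTerm) : MStep (.app .M s) (.app s s)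
  | left {t t' : MTerm} (u : MTerm) : MStep t t' → MStep (.app t u) (.app t' u)
  | right (u : MTerm) {t t' : MTerm} : MStep t t' → MStep (.app u t) (.app u t')

/-- Rewrite order: reflexive-transitive closure of `MStep`. -/
def MLe : MTerm → MTerm → Prop := Relation.ReflTransGen MStep

/-- A term is a combinator when it contains no variable. -/
def NoVar : MTerm → Prop
  | .M => True
  | .var _ => False
  | .app a b => NoVar a ∧ NoVar b

/-- Subterm (factor) relation. -/
inductive MSub : MTerm → MTerm → Prop
  | refl (t : MTerm) : MSub t t
  | left {s a : MTerm} (b : MTerm) : MSub s a → MSub s (.app a b)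
  | right (a : MTerm) {s b : MTerm} : MSub s b → MSub s (.app a b)

/-- Height: maximal number of internal nodes on a root-to-leaf path. -/
def ht : MTerm → ℕ
  | .M => 0
  | .var _ => 0
  | .app a b => max (ht a) (ht b) + 1

/-- Degree: number of application (internal) nodes. -/
def deg : MTerm → ℕ
  | .M => 0
  | .var _ => 0
  | .app a b => deg a + deg b + 1

/-- The right comb combinator of degree d: r₀ = M and r_d = M r_{d-1}. -/
def comb : ℕ → MTerm
  | 0 => .M
  | d + 1 => .app .M (comb d)

/-- The family of sequences a_k: a_k(0) = 1 and
a_k(n) = a_k(n-1)² + ∑_{i=0}^{k} C(k, i) a_{k+i}(n-1). -/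
def seqA : ℕ → ℕ → ℕ
  | _, 0 => 1
  | k, n + 1 =>
      (seqA k n) ^ 2 + ∑ i ∈ Finset.range (k + 1), Nat.choose k i * seqA (k + i) n


namespace Mock

lemma mle_refl (t : MTerm) : MLe t t := Relation.ReflTransGen.refl
lemma mle_trans {a b c : MTerm} (h : MLe a b) (h' : MLe b c) : MLe a c :=
  Relation.ReflTransGen.trans h h'

lemma mstep_app {t t' : MTerm} (h : MStep t t') : ∃ a b, t' = .app a b := by
  cases h with
  | mock s => exact ⟨s, s, rfl⟩
  | left u h => exact ⟨_, _, rfl⟩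
  | right u h => exact ⟨_, _, rfl⟩

lemma no_step_M {t : MTerm} (h : MStep .M t) : False := by cases h

lemma mle_M {c : MTerm} (h : MLe .M c) : c = .M := by
  rcases Relation.ReflTransGen.cases_head h with rfl | ⟨b, hb, _⟩
  · rfl
  · exact absurd hb no_step_M

lemma mle_eq_or_app {a c : MTerm} (h : MLe a c) : c = a ∨ ∃ p q, c = .app p q := by
  rcases Relation.ReflTransGen.cases_tail h with rfl | ⟨b, _, hb⟩
  · exact .inl rfl
  · exact .inr (mstep_app hb)

lemma mle_to_M {t : MTerm} (h : MLe t .M) : t = .M := by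
  rcases Relation.ReflTransGen.cases_tail h with h' | ⟨b, _, hb⟩
  · exact h'.symm
  · obtain ⟨a, b', hab⟩ := mstep_app hb
    exact absurd hab (by simp)

lemma mle_left {a a' : MTerm} (u : MTerm) (h : MLe a a') : MLe (.app a u) (.app a' u) := by
  induction h with
  | refl => exact mle_refl _
  | tail _ hs ih => exact ih.tail (.left u hs)

lemma mle_right {b b' : MTerm} (u : MTerm) (h : MLe b b') : MLe (.app u b) (.app u b') := by
  induction h with
  | refl => exact mle_refl _
  | tail _ hs ih => exact ih.tail (.right u hs)

lemma mle_app_congr {a a' b b' : MTerm} (ha : MLe a a') (hb : MLe b b') :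
    MLe (.app a b) (.app a' b') := mle_trans (mle_left b ha) (mle_right a' hb)

lemma mle_app_ne {a b c : MTerm} (ha : a ≠ .M) (h : MLe (.app a b) c) :
    ∃ a' b', c = .app a' b' ∧ MLe a a' ∧ MLe b b' := by
  induction h with
  | refl => exact ⟨a, b, rfl, mle_refl a, mle_refl b⟩
  | tail h step ih =>
    obtain ⟨a', b', rfl, h1, h2⟩ := ih
    have ha' : a' ≠ .M := by
      rcases mle_eq_or_app h1 with rfl | ⟨p, q, rfl⟩
      · exact ha
      · simp
    cases step with
    | mock s => exact absurd rfl ha'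
    | left u hs => exact ⟨_, b', rfl, h1.tail hs, h2⟩
    | right u hs => exact ⟨a', _, rfl, h1, h2.tail hs⟩

lemma mle_appM {t c : MTerm} (h : MLe (.app .M t) c) :
    (∃ t', c = .app .M t' ∧ MLe t t') ∨ (∃ u v, c = .app u v ∧ MLe t u ∧ MLe t v) := by
  induction h with
  | refl => exact .inl ⟨t, rfl, mle_refl t⟩
  | tail h step ih =>
    rcases ih with ⟨t', rfl, ht⟩ | ⟨u, v, rfl, hu, hv⟩
    · cases step with
      | mock s => exact .inr ⟨t', t', rfl, ht, ht⟩
      | left u hs => exact absurd hs no_step_M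
      | right u hs => exact .inl ⟨_, rfl, ht.tail hs⟩
    · cases step with
      | mock s => exact .inr ⟨v, v, rfl, hv, hv⟩
      | left _ hs => exact .inr ⟨_, v, rfl, hu.tail hs, hv⟩
      | right _ hs => exact .inr ⟨u, _, rfl, hu, hv.tail hs⟩

lemma mle_appM_of_le {t u v : MTerm} (h : MLe t u) (h' : MLe t v) :
    MLe (.app .M t) (.app u v) :=
  mle_trans (Relation.ReflTransGen.single (.mock t)) (mle_app_congr h h')

lemma comb_succ_is_app {d : ℕ} {u : MTerm} (h : MLe (comb (d + 1)) u) :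
    ∃ p q, u = .app p q := by
  rcases mle_eq_or_app h with rfl | h'
  · exact ⟨.M, comb d, rfl⟩
  · exact h'

lemma comb_succ_ne_M {d : ℕ} {u : MTerm} (h : MLe (comb (d + 1)) u) : u ≠ .M := by
  obtain ⟨p, q, rfl⟩ := comb_succ_is_app h; simp

lemma mle_comb1 {c : MTerm} (h : MLe (comb 1) c) : c = comb 1 := by
  rcases mle_appM h with ⟨t', rfl, ht⟩ | ⟨u, v, rfl, hu, hv⟩
  · rw [mle_M ht]; rfl
  · rw [mle_M hu, mle_M hv]; rfl

end Mock
deriving instance DecidableEq for MTerm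

namespace Mock

def reachSet : ℕ → Finset MTerm
  | 0 => {.M}
  | d + 1 =>
      ((reachSet d).image (.app .M)) ∪
        ((reachSet d ×ˢ reachSet d).image fun p => .app p.1 p.2)

lemma mem_reachSet : ∀ {d : ℕ} {t : MTerm}, MLe (comb d) t → t ∈ reachSet d := by
  intro d
  induction d with
  | zero => intro t h; simp [reachSet, mle_M h]
  | succ d ih =>
    intro t h
    rcases mle_appM h with ⟨t', rfl, ht⟩ | ⟨u, v, rfl, hu, hv⟩
    · simp only [reachSet, Finset.mem_union, Finset.mem_image]
      exact .inl ⟨t', ih ht, rfl⟩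
    · simp only [reachSet, Finset.mem_union, Finset.mem_image, Finset.mem_product]
      exact .inr ⟨(u, v), ⟨ih hu, ih hv⟩, rfl⟩

/-- `Bi ι d`: a bottom element above `comb d` together with an `ι`-indexed family above it. -/
def Bi (ι : Type) (d : ℕ) : Type :=
  {x : MTerm × (ι → MTerm) // MLe (comb d) x.1 ∧ ∀ i, MLe x.1 (x.2 i)}

def UpOk (t : MTerm) : MTerm ⊕ MTerm × MTerm → Prop
  | .inl a => MLe t a
  | .inr (a, b) => MLe t a ∧ MLe t b

def Ci (k d : ℕ) : Type :=
  {x : MTerm × (Fin k → MTerm ⊕ MTerm × MTerm) // MLe (comb d) x.1 ∧ ∀ i, UpOk x.1 (x.2 i)}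

instance finiteBi (ι : Type) [Finite ι] (d : ℕ) : Finite (Bi ι d) := by
  have : ∀ x : Bi ι d, ∀ i, MLe (comb d) (x.1.2 i) :=
    fun x i => mle_trans x.2.1 (x.2.2 i)
  apply Finite.of_injective
    (fun x : Bi ι d =>
      ((⟨x.1.1, mem_reachSet x.2.1⟩ : ↥(reachSet d)),
        fun i => (⟨x.1.2 i, mem_reachSet (this x i)⟩ : ↥(reachSet d))))
  intro x y h
  have h1 : x.1.1 = y.1.1 := congrArg (fun p => (Subtype.val (Prod.fst p))) h
  have h2 : ∀ i, x.1.2 i = y.1.2 i :=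
    fun i => congrArg Subtype.val (congrFun (congrArg Prod.snd h) i)
  exact Subtype.ext (Prod.ext h1 (funext h2))

def UpLe (d : ℕ) : MTerm ⊕ MTerm × MTerm → Prop
  | .inl a => MLe (comb d) a
  | .inr (a, b) => MLe (comb d) a ∧ MLe (comb d) b

lemma upLe_of {d : ℕ} {t : MTerm} {z : MTerm ⊕ MTerm × MTerm}
    (h0 : MLe (comb d) t) (h : UpOk t z) : UpLe d z := by
  cases z with
  | inl a => exact mle_trans h0 h
  | inr p => obtain ⟨a, b⟩ := p; exact ⟨mle_trans h0 h.1, mle_trans h0 h.2⟩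

def encU (d : ℕ) : (z : MTerm ⊕ MTerm × MTerm) → UpLe d z →
    ↥(reachSet d) ⊕ ↥(reachSet d) × ↥(reachSet d)
  | .inl a, h => .inl ⟨a, mem_reachSet h⟩
  | .inr (a, b), h => .inr (⟨a, mem_reachSet h.1⟩, ⟨b, mem_reachSet h.2⟩)

lemma encU_inj {d : ℕ} {z z' : MTerm ⊕ MTerm × MTerm} {h : UpLe d z} {h' : UpLe d z'}
    (he : encU d z h = encU d z' h') : z = z' := by
  cases z with
  | inl a =>
    cases z' with
    | inl a' => simpa [encU] using he
    | inr p' => obtain ⟨a', b'⟩ := p'; simp [encU] at he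
  | inr p =>
    obtain ⟨a, b⟩ := p
    cases z' with
    | inl a' => simp [encU] at he
    | inr p' => obtain ⟨a', b'⟩ := p'; simpa [encU, Prod.ext_iff] using he

instance finiteCi (k d : ℕ) : Finite (Ci k d) := by
  apply Finite.of_injective
    (fun x : Ci k d =>
      ((⟨x.1.1, mem_reachSet x.2.1⟩ : ↥(reachSet d)),
        fun i => encU d (x.1.2 i) (upLe_of x.2.1 (x.2.2 i))))
  intro x y h
  have h1 : x.1.1 = y.1.1 := congrArg (fun p => (Subtype.val (Prod.fst p))) h
  have h2 : ∀ i, x.1.2 i = y.1.2 i :=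
    fun i => encU_inj (congrFun (congrArg Prod.snd h) i)
  exact Subtype.ext (Prod.ext h1 (funext h2))

end Mock
namespace Mock

lemma card_Bi_one (k : ℕ) : Nat.card (Bi (Fin k) 1) = 1 := by
  haveI : Unique (Bi (Fin k) 1) :=
    { default := ⟨(comb 1, fun _ => comb 1), mle_refl _, fun _ => mle_refl _⟩
      uniq := fun x => by
        have h1 : x.1.1 = comb 1 := mle_comb1 x.2.1
        have h2 : ∀ i, x.1.2 i = comb 1 := fun i => mle_comb1 (mle_trans x.2.1 (x.2.2 i))
        exact Subtype.ext (Prod.ext h1 (funext h2)) }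
  exact Nat.card_unique

def biCongr {ι ι' : Type} (e : ι ≃ ι') (d : ℕ) : Bi ι d ≃ Bi ι' d where
  toFun x := ⟨(x.1.1, fun i => x.1.2 (e.symm i)), x.2.1, fun i => x.2.2 _⟩
  invFun x := ⟨(x.1.1, fun i => x.1.2 (e i)), x.2.1, fun i => x.2.2 _⟩
  left_inv x := Subtype.ext (Prod.ext rfl (funext fun i => by simp))
  right_inv x := Subtype.ext (Prod.ext rfl (funext fun i => by simp))

def decU : MTerm ⊕ MTerm × MTerm → MTerm
  | .inl a => .app .M a
  | .inr (a, b) => .app a b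

lemma le_decU {t : MTerm} {z : MTerm ⊕ MTerm × MTerm} (h : UpOk t z) :
    MLe (.app .M t) (decU z) := by
  cases z with
  | inl a => exact mle_right .M h
  | inr p => obtain ⟨a, b⟩ := p; exact mle_appM_of_le h.1 h.2

def G (k d : ℕ) : (Bi (Fin k) (d + 1) × Bi (Fin k) (d + 1)) ⊕ Ci k (d + 1) →
    Bi (Fin k) (d + 2)
  | .inl (x, y) =>
      ⟨(.app x.1.1 y.1.1, fun i => .app (x.1.2 i) (y.1.2 i)),
        mle_appM_of_le x.2.1 y.2.1,
        fun i => mle_app_congr (x.2.2 i) (y.2.2 i)⟩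
  | .inr c =>
      ⟨(.app .M c.1.1, fun i => decU (c.1.2 i)),
        mle_right .M c.2.1,
        fun i => le_decU (c.2.2 i)⟩

lemma decU_inj {d : ℕ} {t t' : MTerm} {z z' : MTerm ⊕ MTerm × MTerm}
    (ht : MLe (comb (d + 1)) t) (ht' : MLe (comb (d + 1)) t')
    (hz : UpOk t z) (hz' : UpOk t' z') (he : decU z = decU z') : z = z' := by
  cases z with
  | inl a =>
    cases z' with
    | inl a' => simpa [decU] using he
    | inr p' =>
      obtain ⟨a', b'⟩ := p'
      simp only [decU, MTerm.app.injEq] at he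
      exact absurd he.1.symm (comb_succ_ne_M (mle_trans ht' hz'.1))
  | inr p =>
    obtain ⟨a, b⟩ := p
    cases z' with
    | inl a' =>
      simp only [decU, MTerm.app.injEq] at he
      exact absurd he.1 (comb_succ_ne_M (mle_trans ht hz.1))
    | inr p' => obtain ⟨a', b'⟩ := p'; simpa [decU, Prod.ext_iff] using he

lemma G_bijective (k d : ℕ) : Function.Bijective (G k d) := by
  constructor
  · intro z1 z2 h
    have h' : (G k d z1).1 = (G k d z2).1 := congrArg Subtype.val h
    match z1, z2 with
    | .inl (x, y), .inl (x', y') =>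
      simp only [G, Prod.mk.injEq, MTerm.app.injEq] at h'
      obtain ⟨⟨h1, h2⟩, h3⟩ := h'
      have h4 : ∀ i, x.1.2 i = x'.1.2 i ∧ y.1.2 i = y'.1.2 i := by
        intro i
        have := congrFun h3 i
        simpa [MTerm.app.injEq] using this
      congr 1
      exact Prod.ext (Subtype.ext (Prod.ext h1 (funext fun i => (h4 i).1)))
        (Subtype.ext (Prod.ext h2 (funext fun i => (h4 i).2)))
    | .inl (x, y), .inr c =>
      simp only [G, Prod.mk.injEq, MTerm.app.injEq] at h'
      exact absurd h'.1.1 (comb_succ_ne_M x.2.1)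
    | .inr c, .inl (x, y) =>
      simp only [G, Prod.mk.injEq, MTerm.app.injEq] at h'
      exact absurd h'.1.1.symm (comb_succ_ne_M x.2.1)
    | .inr c, .inr c' =>
      simp only [G, Prod.mk.injEq, MTerm.app.injEq] at h'
      obtain ⟨⟨-, h1⟩, h3⟩ := h'
      have h4 : ∀ i, c.1.2 i = c'.1.2 i := by
        intro i
        exact decU_inj c.2.1 c'.2.1 (c.2.2 i) (c'.2.2 i) (congrFun h3 i)
      congr 1
      exact Subtype.ext (Prod.ext h1 (funext h4))
  · rintro ⟨⟨t, y⟩, h0, h1⟩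
    have h0' : MLe (.app .M (comb (d + 1))) t := h0
    rcases mle_appM h0' with ⟨s, rfl, hs⟩ | ⟨u, v, rfl, hu, hv⟩
    · have H : ∀ i, ∃ z : MTerm ⊕ MTerm × MTerm, UpOk s z ∧ y i = decU z := by
        intro i
        rcases mle_appM (h1 i) with ⟨t', hyi, ht⟩ | ⟨a, b, hyi, ha, hb⟩
        · exact ⟨.inl t', ht, hyi⟩
        · exact ⟨.inr (a, b), ⟨ha, hb⟩, hyi⟩
      choose c hc1 hc2 using H
      exact ⟨.inr ⟨(s, c), hs, hc1⟩,
        Subtype.ext (Prod.ext rfl (funext fun i => (hc2 i).symm))⟩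
    · have hne : u ≠ .M := comb_succ_ne_M hu
      have H : ∀ i, ∃ a' b', y i = .app a' b' ∧ MLe u a' ∧ MLe v b' :=
        fun i => mle_app_ne hne (h1 i)
      choose f g hy hf hg using H
      exact ⟨.inl (⟨(u, f), hu, hf⟩, ⟨(v, g), hv, hg⟩),
        Subtype.ext (Prod.ext rfl (funext fun i => (hy i).symm))⟩

lemma card_step (k d : ℕ) :
    Nat.card (Bi (Fin k) (d + 2)) =
      Nat.card (Bi (Fin k) (d + 1)) * Nat.card (Bi (Fin k) (d + 1)) + Nat.card (Ci k (d + 1)) := by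
  rw [← Nat.card_congr (Equiv.ofBijective _ (G_bijective k d))]
  rw [Nat.card_sum, Nat.card_prod]

end Mock
namespace Mock

def shape (k d : ℕ) (x : Ci k d) : Finset (Fin k) :=
  Finset.univ.filter (fun i => (x.1.2 i).isRight)

def G2 (k d : ℕ) (s : Finset (Fin k)) (x : Bi (Fin k ⊕ {i // i ∈ s}) d) :
    {x : Ci k d // shape k d x = s} :=
  ⟨⟨(x.1.1, fun i =>
      if h : i ∈ s then .inr (x.1.2 (.inl i), x.1.2 (.inr ⟨i, h⟩))
      else .inl (x.1.2 (.inl i))),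
    x.2.1, fun i => by
      by_cases h : i ∈ s
      · simp only [dif_pos h]; exact ⟨x.2.2 _, x.2.2 _⟩
      · simp only [dif_neg h]; exact x.2.2 _⟩, by
    ext i
    by_cases h : i ∈ s <;> simp [shape, h]⟩

lemma G2_bijective (k d : ℕ) (s : Finset (Fin k)) : Function.Bijective (G2 k d s) := by
  constructor
  · intro x x' h
    have h' : ((G2 k d s x).1).1 = ((G2 k d s x').1).1 := congrArg (fun w => w.1.1) h
    simp only [G2, Prod.mk.injEq] at h'
    obtain ⟨h1, h2⟩ := h'
    refine Subtype.ext (Prod.ext h1 (funext fun j => ?_))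
    cases j with
    | inl i =>
      have := congrFun h2 i
      by_cases h3 : i ∈ s
      · rw [dif_pos h3, dif_pos h3] at this
        simp only [Sum.inr.injEq, Prod.mk.injEq] at this
        exact this.1
      · rw [dif_neg h3, dif_neg h3] at this
        simpa using this
    | inr p =>
      obtain ⟨i, hi⟩ := p
      have := congrFun h2 i
      rw [dif_pos hi, dif_pos hi] at this
      simp only [Sum.inr.injEq, Prod.mk.injEq] at this
      exact this.2
  · rintro ⟨⟨⟨t, c⟩, h0, h1⟩, hsh⟩
    have hiff : ∀ i, (c i).isRight = true ↔ i ∈ s := by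
      intro i
      rw [← hsh]
      simp [shape]
    refine ⟨⟨(t, Sum.elim (fun i => Sum.elim id Prod.fst (c i))
        (fun p : {i // i ∈ s} => Sum.elim id Prod.snd (c p.1))), h0, ?_⟩, ?_⟩
    · rintro (i | ⟨i, hi⟩)
      · have hti : UpOk t (c i) := h1 i
        rcases hc : c i with a | ⟨a, b⟩ <;> rw [hc] at hti <;>
          simp only [Sum.elim_inl, Sum.elim_inr, hc, id_eq]
        · exact hti
        · exact hti.1
      · have hti : UpOk t (c i) := h1 i
        have hr : (c i).isRight = true := (hiff i).mpr hi
        rcases hc : c i with a | ⟨a, b⟩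
        · rw [hc] at hr; simp at hr
        · rw [hc] at hti
          simp only [Sum.elim_inl, Sum.elim_inr, hc, id_eq]
          exact hti.2
    · refine Subtype.ext (Subtype.ext (Prod.ext rfl (funext fun i => ?_)))
      by_cases hi : i ∈ s
      · have hr : (c i).isRight = true := (hiff i).mpr hi
        rcases hc : c i with a | ⟨a, b⟩
        · rw [hc] at hr; simp at hr
        · simp only [G2]; rw [dif_pos hi]; simp [hc]
      · have hr : ¬ (c i).isRight = true := fun h => hi ((hiff i).mp h)
        rcases hc : c i with a | ⟨a, b⟩
        · simp only [G2]; rw [dif_neg hi]; simp [hc]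
        · rw [hc] at hr; simp at hr

lemma nat_card_sigma {ι : Type} [Fintype ι] (f : ι → Type) [∀ i, Finite (f i)] :
    Nat.card (Σ i, f i) = ∑ i, Nat.card (f i) := by
  letI : ∀ i, Fintype (f i) := fun i => Fintype.ofFinite _
  simp [Nat.card_eq_fintype_card]

lemma card_fiber (k d : ℕ) (s : Finset (Fin k)) :
    Nat.card {x : Ci k d // shape k d x = s} = Nat.card (Bi (Fin (k + s.card)) d) := by
  rw [← Nat.card_congr (Equiv.ofBijective _ (G2_bijective k d s))]
  exact Nat.card_congr (biCongr
    ((Equiv.sumCongr (Equiv.refl (Fin k)) s.equivFin).trans finSumFinEquiv) d)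

lemma card_Ci (k d : ℕ) (h : ∀ j, Nat.card (Bi (Fin j) (d + 1)) = seqA j d) :
    Nat.card (Ci k (d + 1)) =
      ∑ i ∈ Finset.range (k + 1), Nat.choose k i * seqA (k + i) d := by
  rw [← Nat.card_congr (Equiv.sigmaFiberEquiv (shape k (d + 1)))]
  rw [nat_card_sigma]
  have : ∀ s : Finset (Fin k),
      Nat.card {x : Ci k (d + 1) // shape k (d + 1) x = s} = seqA (k + s.card) d := by
    intro s; rw [card_fiber, h]
  rw [Finset.sum_congr rfl fun s _ => this s]
  rw [← Finset.powerset_univ]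
  rw [Finset.sum_powerset_apply_card (fun m => seqA (k + m) d)]
  simp [Finset.card_univ]

lemma card_Bi : ∀ d k, Nat.card (Bi (Fin k) (d + 1)) = seqA k d := by
  intro d
  induction d with
  | zero => intro k; rw [card_Bi_one k]; rfl
  | succ d ih =>
    intro k
    rw [card_step k d, card_Ci k d ih, ih k]
    show _ = seqA k (d + 1)
    rw [show seqA k (d + 1) =
      (seqA k d) ^ 2 + ∑ i ∈ Finset.range (k + 1), Nat.choose k i * seqA (k + i) d from rfl]
    ring

end Mock
/-- The number of intervals of the Mockingbird lattice M(d) equals a₁(d-1) for d ≥ 1;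
the numbers of intervals of M(0), M(1), … are 1, 1, 3, 17, 371, 144513. -/
theorem mockingbird_intervals :
    Nat.card {p : MTerm × MTerm // MLe (comb 0) p.1 ∧ MLe p.1 p.2} = 1 ∧
    (∀ d : ℕ, 1 ≤ d →
      Nat.card {p : MTerm × MTerm // MLe (comb d) p.1 ∧ MLe p.1 p.2} = seqA 1 (d - 1)) ∧
    seqA 1 0 = 1 ∧ seqA 1 1 = 3 ∧ seqA 1 2 = 17 ∧ seqA 1 3 = 371 ∧ seqA 1 4 = 144513 := by
  refine ⟨?_, ?_, by decide, by decide, by decide, by decide, by decide⟩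
  · haveI : Unique {p : MTerm × MTerm // MLe (comb 0) p.1 ∧ MLe p.1 p.2} :=
      { default := ⟨(.M, .M), Mock.mle_refl _, Mock.mle_refl _⟩
        uniq := fun x => by
          have h1 : x.1.1 = .M := Mock.mle_M x.2.1
          have h2 : x.1.2 = .M := Mock.mle_M (h1 ▸ x.2.2)
          exact Subtype.ext (Prod.ext h1 h2) }
    exact Nat.card_unique
  · intro d hd
    obtain ⟨e, rfl⟩ : ∃ e, d = e + 1 := ⟨d - 1, (Nat.succ_pred_eq_of_pos hd).symm⟩
    simp only [Nat.add_sub_cancel]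
    rw [← Mock.card_Bi e 1]
    refine Nat.card_congr
      { toFun := fun p => ⟨(p.1.1, fun _ => p.1.2), p.2.1, fun _ => p.2.2⟩
        invFun := fun x => ⟨(x.1.1, x.1.2 0), x.2.1, x.2.2 0⟩
        left_inv := fun p => rfl
        right_inv := fun x => Subtype.ext (Prod.ext rfl (funext fun i => by
          have : i = 0 := Subsingleton.elim i 0
          rw [this])) }
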